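/- arXiv:1008.0025 — 2 statements merged into one kernel-verified Lean document; each statement's English description precedes it below -/
import Mathlib

section
/- Let V be a D(ℝ)-submodule of D(ℝ)^(n) and let S and S′ both be s-bases of V. Then S′ is obtained from S by multiplying by tangible scalars: there is a bijection σ : S → S′ such that for each s ∈ S there is a tangible α_s ∈ T with σ(s) = α_s · s. -/
noncomputable section

/-- The extended tropical semifield `D(ℝ)`: `bot` is `-∞`; `nb g r` is the element of
underlying value `r : ℝ`, ghost if `g = true`, tangible if `g = false`. -/
inductive DR : Type where
  | bot : DR
  | nb : Bool → ℝ → DR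

namespace DR

/-- Supertropical addition on `D(ℝ)`. -/
def add : DR → DR → DR
  | bot, y => y
  | x, bot => x
  | nb b r, nb c s => if r < s then nb c s else if s < r then nb b r else nb true r

/-- Supertropical multiplication on `D(ℝ)`. -/
def mul : DR → DR → DR
  | bot, _ => bot
  | _, bot => bot
  | nb b r, nb c s => nb (b || c) (r + s)

theorem bot_add (x : DR) : add bot x = x := by cases x <;> rfl

theorem add_bot (x : DR) : add x bot = x := by cases x <;> rfl

theorem bot_mul (x : DR) : mul bot x = bot := by cases x <;> rfl

theorem mul_bot (x : DR) : mul x bot = bot := by cases x <;> rfl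

theorem add_comm' (x y : DR) : add x y = add y x := by
  cases x <;> cases y <;> (try rfl)
  simp only [add]
  split_ifs <;>
    first
      | rfl
      | (exfalso; linarith)
      | (congr 1 <;> first | rfl | linarith)

theorem add_assoc' (x y z : DR) : add (add x y) z = add x (add y z) := by
  cases x with
  | bot => rw [bot_add, bot_add]
  | nb b r =>
    cases y with
    | bot => rw [add_bot, bot_add]
    | nb c s =>
      cases z with
      | bot => rw [add_bot, add_bot]
      | nb d t =>
        simp only [add]
        split_ifs <;>
          simp only [add] <;>
          (try split_ifs) <;>
          first
            | rfl
            | (exfalso; linarith)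
            | (congr 1 <;> first | rfl | linarith)

theorem mul_comm' (x y : DR) : mul x y = mul y x := by
  cases x <;> cases y <;> (try rfl)
  simp [mul, Bool.or_comm, add_comm]

theorem mul_assoc' (x y z : DR) : mul (mul x y) z = mul x (mul y z) := by
  cases x <;> cases y <;> cases z <;> (try rfl) <;>
    simp [mul, Bool.or_assoc, add_assoc]

theorem one_mul' (x : DR) : mul (nb false 0) x = x := by
  cases x <;> simp [mul]

theorem left_distrib' (x y z : DR) : mul x (add y z) = add (mul x y) (mul x z) := by
  cases x with
  | bot => simp [bot_mul, bot_add]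
  | nb b r =>
    cases y with
    | bot => simp [bot_add, mul_bot]
    | nb c s =>
      cases z with
      | bot => simp [add_bot, mul_bot]
      | nb d t =>
        simp only [mul, add]
        split_ifs <;>
          simp only [mul, add, Bool.or_true, Bool.true_or] <;>
          (try split_ifs) <;>
          first
            | rfl
            | (exfalso; linarith)
            | (congr 1 <;> first | rfl | linarith)

theorem right_distrib' (x y z : DR) : mul (add x y) z = add (mul x z) (mul y z) := by
  rw [mul_comm' (add x y) z, left_distrib', mul_comm' z x, mul_comm' z y]

instance : Add DR := ⟨add⟩
instance : Zero DR := ⟨bot⟩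
instance : Mul DR := ⟨mul⟩
instance : One DR := ⟨nb false 0⟩

instance : AddCommMonoid DR where
  add := add
  add_assoc := add_assoc'
  zero := bot
  zero_add := bot_add
  add_zero := add_bot
  add_comm := add_comm'
  nsmul := nsmulRec

instance : CommMonoid DR where
  mul := mul
  mul_assoc := mul_assoc'
  one := nb false 0
  one_mul := one_mul'
  mul_one := fun x => by show mul x (nb false 0) = x; rw [mul_comm']; exact one_mul' x
  mul_comm := mul_comm'
  npow := npowRec

instance : CommSemiring DR where
  __ := (inferInstance : AddCommMonoid DR)
  __ := (inferInstance : CommMonoid DR)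
  left_distrib := left_distrib'
  right_distrib := right_distrib'
  zero_mul := bot_mul
  mul_zero := mul_bot

/-- The ghost ideal `G₀ = ℝ^ν ∪ {-∞}` as a predicate. -/
def IsGhost : DR → Prop
  | bot => True
  | nb b _ => b = true

/-- The tangible elements `T = ℝ` as a predicate. -/
def Tangible : DR → Prop
  | nb false _ => True
  | _ => False

/-- Membership in `T ∪ {-∞}`. -/
def TangibleOrBot (x : DR) : Prop := x = bot ∨ Tangible x

/-- The underlying value in `ℝ ∪ {-∞}`. -/
def val : DR → WithBot ℝ
  | bot => ⊥
  | nb _ r => (r : WithBot ℝ)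

/-- `x ≤_ν y` : comparison of underlying values, `-∞` smallest. -/
def nuLe (x y : DR) : Prop := val x ≤ val y

/-- `x <_ν y` : strict comparison of underlying values, `-∞` smallest. -/
def nuLt (x y : DR) : Prop := val x < val y

/-- The tangible lift `x̂` of `x` (with `hat bot = bot`). -/
def hat : DR → DR
  | bot => bot
  | nb _ r => nb false r

/-- The ghost map `ν`. -/
def nu : DR → DR
  | bot => bot
  | nb _ r => nb true r

/-- The ghost-surpass relation `x ⊨ y` on `D(ℝ)`. -/
def GhostSurp (x y : DR) : Prop := ∃ c : DR, IsGhost c ∧ x = y + c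

end DR

open DR

/-- A vector in `D(ℝ)^(n)` lies in the ghost submodule `G₀^(n)`. -/
def GhostVec {n : ℕ} (v : Fin n → DR) : Prop := ∀ j, IsGhost (v j)

/-- A tangible vector: all entries in `T ∪ {-∞}`. -/
def TangibleVec {n : ℕ} (v : Fin n → DR) : Prop := ∀ j, TangibleOrBot (v j)

/-- The ghost-surpass relation `v ⊨ w` on vectors. -/
def GhostSurpVec {n : ℕ} (v w : Fin n → DR) : Prop :=
  ∃ u : Fin n → DR, GhostVec u ∧ v = w + u

/-- A family of vectors is tropically dependent. -/
def TropDep {ι : Type*} [Fintype ι] {n : ℕ} (w : ι → Fin n → DR) : Prop :=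
  ∃ I : Finset ι, I.Nonempty ∧ ∃ α : ι → DR, (∀ i ∈ I, Tangible (α i)) ∧
    ∀ j : Fin n, IsGhost (∑ i ∈ I, α i * w i j)

/-- A family of vectors is tropically independent. -/
def TropIndep {ι : Type*} [Fintype ι] {n : ℕ} (w : ι → Fin n → DR) : Prop := ¬ TropDep w

/-- A set of vectors is tropically dependent. -/
def SetTropDep {n : ℕ} (S : Set (Fin n → DR)) : Prop :=
  ∃ I : Finset (Fin n → DR), ↑I ⊆ S ∧ I.Nonempty ∧
    ∃ α : (Fin n → DR) → DR, (∀ w ∈ I, Tangible (α w)) ∧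
      ∀ j : Fin n, IsGhost (∑ w ∈ I, α w * w j)

/-- A set of vectors is tropically independent. -/
def SetTropIndep {n : ℕ} (S : Set (Fin n → DR)) : Prop := ¬ SetTropDep S

/-- A d-base of `V`: a maximal tropically independent subset of `V`. -/
def IsDBase {n : ℕ} (V S : Set (Fin n → DR)) : Prop :=
  S ⊆ V ∧ SetTropIndep S ∧ ∀ S', S ⊆ S' → S' ⊆ V → SetTropIndep S' → S' = S

/-- The rank of `V`: the maximal number of elements of a d-base of `V`. -/
noncomputable def trank {n : ℕ} (V : Set (Fin n → DR)) : ℕ :=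
  sSup {m | ∃ S, IsDBase V S ∧ S.Finite ∧ S.ncard = m}

/-- `v` is tropically spanned by `S`. -/
def SpannedBy {n : ℕ} (S : Set (Fin n → DR)) (v : Fin n → DR) : Prop :=
  ∃ I : Finset (Fin n → DR), ↑I ⊆ S ∧ I.Nonempty ∧
    ∃ α : (Fin n → DR) → DR, (∀ w ∈ I, Tangible (α w)) ∧
      GhostSurpVec v (fun j => ∑ w ∈ I, α w * w j)

/-- The tropical determinant (permanent) of a square matrix over `D(ℝ)`. -/
noncomputable def tperm {k : ℕ} (A : Matrix (Fin k) (Fin k) DR) : DR :=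
  ∑ π : Equiv.Perm (Fin k), ∏ i, A (π i) i

/-- `S` tropically spans `V`. -/
def TropSpans {n : ℕ} (S V : Set (Fin n → DR)) : Prop := ∀ v ∈ V, SpannedBy S v

/-- An s-base of `V`: a minimal tropically spanning subset of `V`. -/
def IsSBase {n : ℕ} (V S : Set (Fin n → DR)) : Prop :=
  S ⊆ V ∧ TropSpans S V ∧ ∀ S' ⊂ S, ¬ TropSpans S' V

/-! ### Auxiliary lemmas -/

namespace SBaseAux

open DR

theorem zero_def : (0 : DR) = DR.bot := rfl

theorem one_def : (1 : DR) = DR.nb false 0 := rfl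

theorem val_zero' : val (0 : DR) = ⊥ := rfl

theorem val_one' : val (1 : DR) = ((0 : ℝ) : WithBot ℝ) := rfl

theorem val_eq_bot {x : DR} : val x = ⊥ ↔ x = 0 := by
  cases x with
  | bot => simp [val, zero_def]
  | nb b r => simp [val, zero_def]

theorem val_add' (x y : DR) : val (x + y) = val x ⊔ val y := by
  show val (DR.add x y) = _
  cases x with
  | bot => simp [DR.add, val]
  | nb b r =>
    cases y with
    | bot => simp [DR.add, val]
    | nb c s =>
      simp only [DR.add, val]
      split_ifs with h1 h2 <;> simp [val] <;> try linarith

theorem val_mul' (x y : DR) : val (x * y) = val x + val y := by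
  show val (DR.mul x y) = _
  cases x with
  | bot => simp [DR.mul, val]
  | nb b r =>
    cases y with
    | bot => simp [DR.mul, val]
    | nb c s => simp [DR.mul, val]

theorem ghost_zero : IsGhost (0 : DR) := trivial

theorem tangible_one : Tangible (1 : DR) := trivial

theorem not_ghost_of_tangible {x : DR} (h : Tangible x) : ¬ IsGhost x := by
  cases x with
  | bot => exact absurd h (by simp [Tangible])
  | nb b r => cases b <;> simp_all [Tangible, IsGhost]

theorem tangible_or_ghost (x : DR) : Tangible x ∨ IsGhost x := by
  cases x with
  | bot => exact Or.inr trivial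
  | nb b r => cases b <;> simp [Tangible, IsGhost]

theorem ghost_add' {x y : DR} (hx : IsGhost x) (hy : IsGhost y) : IsGhost (x + y) := by
  show IsGhost (DR.add x y)
  cases x with
  | bot => simpa [DR.add] using hy
  | nb b r =>
    cases y with
    | bot => simpa [DR.add] using hx
    | nb c s =>
      simp only [IsGhost] at hx hy
      simp only [DR.add]
      split_ifs <;> simp [IsGhost, hx, hy]

theorem ghost_mul {x y : DR} (hy : IsGhost y) : IsGhost (x * y) := by
  show IsGhost (DR.mul x y)
  cases x with
  | bot => simp [DR.mul, IsGhost]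
  | nb b r =>
    cases y with
    | bot => simp [DR.mul, IsGhost]
    | nb c s =>
      simp only [IsGhost] at hy
      simp [DR.mul, IsGhost, hy]

theorem tangible_mul {x y : DR} (hx : Tangible x) (hy : Tangible y) : Tangible (x * y) := by
  cases x with
  | bot => exact absurd hx (by simp [Tangible])
  | nb b r =>
    cases y with
    | bot => exact absurd hy (by simp [Tangible])
    | nb c s =>
      cases b <;> cases c <;> simp_all [Tangible] <;> exact trivial

theorem add_ghost_of_val_eq {x y : DR} (h : val x = val y) : IsGhost (x + y) := by
  show IsGhost (DR.add x y)
  cases x with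
  | bot =>
    cases y with
    | bot => exact trivial
    | nb c s => simp [val] at h
  | nb b r =>
    cases y with
    | bot => simp [val] at h
    | nb c s =>
      simp only [val] at h
      have : r = s := by exact_mod_cast h
      subst this
      simp [DR.add, IsGhost]

theorem add_eq_left {x y : DR} (h : val y < val x) : x + y = x := by
  show DR.add x y = x
  cases x with
  | bot => simp [val] at h
  | nb b r =>
    cases y with
    | bot => simp [DR.add]
    | nb c s =>
      simp only [val] at h
      have hs : s < r := by exact_mod_cast h
      simp [DR.add, hs, not_lt.2 hs.le]

theorem add_eq_right {x y : DR} (h : val x < val y) : x + y = y := by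
  have : x + y = y + x := add_comm x y
  rw [this]; exact add_eq_left h

theorem ghost_absorb {x y : DR} (hx : IsGhost x) (h : val y ≤ val x) : x + y = x := by
  rcases lt_or_eq_of_le h with h | h
  · exact add_eq_left h
  · have hg : IsGhost (x + y) := add_ghost_of_val_eq h.symm
    cases x with
    | bot =>
      have : y = 0 := val_eq_bot.1 (le_bot_iff.1 h.le)
      simp [this, zero_def]
      rfl
    | nb b r =>
      cases y with
      | bot => show DR.add _ _ = _; simp [DR.add]
      | nb c s =>
        simp only [val] at h
        have hsr : s = r := by exact_mod_cast h
        subst hsr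
        simp only [IsGhost] at hx
        subst hx
        show DR.add _ _ = _
        simp [DR.add]

theorem exists_inv {x : DR} (hx : Tangible x) : ∃ y : DR, Tangible y ∧ x * y = 1 := by
  cases x with
  | bot => exact absurd hx (by simp [Tangible])
  | nb b r =>
    cases b with
    | false =>
      refine ⟨DR.nb false (-r), trivial, ?_⟩
      show DR.mul _ _ = _
      simp [DR.mul, one_def]
    | true => exact absurd hx (by simp [Tangible])

theorem val_tangible_ne_bot {x : DR} (hx : Tangible x) : val x ≠ ⊥ := by
  cases x with
  | bot => exact absurd hx (by simp [Tangible])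
  | nb b r => simp [val]

section Sums

variable {ι : Type*}

theorem val_sum (I : Finset ι) (f : ι → DR) :
    val (∑ i ∈ I, f i) = I.sup (fun i => val (f i)) := by
  classical
  induction I using Finset.induction_on with
  | empty => simp [val_zero']
  | insert a s h ih =>
    rw [Finset.sum_insert h, val_add', ih, Finset.sup_insert]

theorem val_term_le {I : Finset ι} {f : ι → DR} {i : ι} (hi : i ∈ I) :
    val (f i) ≤ val (∑ i ∈ I, f i) := by
  rw [val_sum]; exact Finset.le_sup (f := fun i => val (f i)) hi

theorem ghost_sum {I : Finset ι} {f : ι → DR} (h : ∀ i ∈ I, IsGhost (f i)) :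
    IsGhost (∑ i ∈ I, f i) := by
  classical
  induction I using Finset.induction_on with
  | empty => simpa using ghost_zero
  | insert a s hmem ih =>
    rw [Finset.sum_insert hmem]
    exact ghost_add' (h a (Finset.mem_insert_self a s))
      (ih fun i hi => h i (Finset.mem_insert_of_mem hi))

theorem sum_tangible_term_lt {I : Finset ι} {f : ι → DR} {i₀ : ι}
    (ht : Tangible (∑ i ∈ I, f i)) (h0 : i₀ ∈ I) (he : f i₀ = ∑ i ∈ I, f i) :
    ∀ i ∈ I, i ≠ i₀ → val (f i) < val (f i₀) := by
  classical
  have hsplit : ∑ i ∈ I, f i = f i₀ + ∑ i ∈ I.erase i₀, f i :=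
    (Finset.add_sum_erase I f h0).symm
  have hlt : val (∑ i ∈ I.erase i₀, f i) < val (f i₀) := by
    rcases lt_trichotomy (val (∑ i ∈ I.erase i₀, f i)) (val (f i₀)) with h | h | h
    · exact h
    · exfalso
      have hg : IsGhost (∑ i ∈ I, f i) := by
        rw [hsplit]; exact add_ghost_of_val_eq h.symm
      exact not_ghost_of_tangible ht hg
    · exfalso
      have h1 : val (∑ i ∈ I, f i) = val (f i₀) ⊔ val (∑ i ∈ I.erase i₀, f i) := by
        rw [hsplit, val_add']
      rw [← he] at h1
      have : val (f i₀) < val (f i₀) := by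
        calc val (f i₀) = _ ⊔ _ := h1
        _ = val (∑ i ∈ I.erase i₀, f i) := sup_eq_right.2 h.le
        _ > val (f i₀) := h
      exact lt_irrefl _ this
  intro i hi hne
  exact lt_of_le_of_lt (val_term_le (Finset.mem_erase.2 ⟨hne, hi⟩)) hlt

theorem sum_eq_of_forall_lt {I : Finset ι} {f : ι → DR} {i₀ : ι} (h0 : i₀ ∈ I)
    (h : ∀ i ∈ I, i ≠ i₀ → val (f i) < val (f i₀)) : ∑ i ∈ I, f i = f i₀ := by
  classical
  rw [← Finset.add_sum_erase I f h0]
  rcases Finset.eq_empty_or_nonempty (I.erase i₀) with he | ⟨i1, hi1⟩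
  · rw [he, Finset.sum_empty, add_zero]
  · have hbot : ⊥ < val (f i₀) := by
      have := h i1 (Finset.mem_of_mem_erase hi1) (Finset.ne_of_mem_erase hi1)
      exact lt_of_le_of_lt bot_le this
    have hlt : val (∑ i ∈ I.erase i₀, f i) < val (f i₀) := by
      rw [val_sum]
      exact (Finset.sup_lt_iff hbot).2 fun i hi =>
        h i (Finset.mem_of_mem_erase hi) (Finset.ne_of_mem_erase hi)
    exact add_eq_left hlt

theorem sum_tangible_exists {I : Finset ι} {f : ι → DR}
    (ht : Tangible (∑ i ∈ I, f i)) :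
    ∃ i₀ ∈ I, f i₀ = (∑ i ∈ I, f i) ∧ ∀ i ∈ I, i ≠ i₀ → val (f i) < val (f i₀) := by
  classical
  have hIne : I.Nonempty := by
    rcases Finset.eq_empty_or_nonempty I with he | hne
    · exfalso
      apply val_tangible_ne_bot ht
      rw [he, Finset.sum_empty, val_zero']
    · exact hne
  obtain ⟨i₀, hi₀, hsup⟩ := Finset.exists_mem_eq_sup I hIne (fun i => val (f i))
  have hv : val (f i₀) = val (∑ i ∈ I, f i) := by rw [val_sum, hsup]
  have he : f i₀ = ∑ i ∈ I, f i := by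
    have hsplit : ∑ i ∈ I, f i = f i₀ + ∑ i ∈ I.erase i₀, f i :=
      (Finset.add_sum_erase I f hi₀).symm
    have hle : val (∑ i ∈ I.erase i₀, f i) ≤ val (f i₀) := by
      rw [val_sum, hv, val_sum]
      exact Finset.sup_mono (Finset.erase_subset i₀ I)
    rcases lt_or_eq_of_le hle with hlt | heq
    · rw [hsplit]; exact (add_eq_left hlt).symm
    · exfalso
      apply not_ghost_of_tangible ht
      rw [hsplit]
      exact add_ghost_of_val_eq heq.symm
  exact ⟨i₀, hi₀, he, sum_tangible_term_lt ht hi₀ he⟩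

end Sums

theorem ghost_mul_left {x y : DR} (hx : IsGhost x) : IsGhost (x * y) := by
  rw [mul_comm]; exact ghost_mul hx

section Vectors

variable {n : ℕ}

theorem smul_apply' (c : DR) (v : Fin n → DR) (j : Fin n) : (c • v) j = c * v j := rfl

theorem ghostVec_zero : GhostVec (0 : Fin n → DR) := fun _ => ghost_zero

theorem spannedBy_iff {S : Set (Fin n → DR)} {v : Fin n → DR} :
    SpannedBy S v ↔ ∃ I : Finset (Fin n → DR), ↑I ⊆ S ∧ I.Nonempty ∧
      ∃ α : (Fin n → DR) → DR, (∀ w ∈ I, Tangible (α w)) ∧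
        ∃ u : Fin n → DR, GhostVec u ∧ ∀ j, v j = (∑ w ∈ I, α w * w j) + u j := by
  constructor
  · rintro ⟨I, hIS, hIne, α, hα, u, hu, hveq⟩
    exact ⟨I, hIS, hIne, α, hα, u, hu, fun j => by rw [hveq]; rfl⟩
  · rintro ⟨I, hIS, hIne, α, hα, u, hu, hrel⟩
    exact ⟨I, hIS, hIne, α, hα, u, hu, funext fun j => hrel j⟩

theorem spannedBy_of_ghost {S : Set (Fin n → DR)} {v : Fin n → DR}
    (h0 : (0 : Fin n → DR) ∈ S) (hv : GhostVec v) : SpannedBy S v := by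
  refine spannedBy_iff.2 ⟨{0}, by simpa using h0, Finset.singleton_nonempty _,
    fun _ => 1, fun _ _ => tangible_one, v, hv, fun j => ?_⟩
  rw [Finset.sum_singleton]
  show v j = 1 * (0 : DR) + v j
  rw [mul_zero, zero_add]

theorem zero_mem_of_spanned {S : Set (Fin n → DR)}
    (h : SpannedBy S (0 : Fin n → DR)) : (0 : Fin n → DR) ∈ S := by
  obtain ⟨I, hIS, hIne, α, hα, u, hu, hrel⟩ := spannedBy_iff.1 h
  obtain ⟨w₀, hw₀⟩ := hIne
  have hall : w₀ = 0 := by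
    funext j
    have h1 := hrel j
    rw [Pi.zero_apply] at h1
    have h2 : val ((∑ w ∈ I, α w * w j) + u j) = ⊥ := by rw [← h1, val_zero']
    rw [val_add'] at h2
    have h3 : val (∑ w ∈ I, α w * w j) = ⊥ := by
      simpa using (sup_eq_bot_iff.1 h2).1
    have h4 : val (α w₀ * w₀ j) = ⊥ := le_bot_iff.1 (h3 ▸ val_term_le (f := fun w => α w * w j) hw₀)
    rw [val_mul'] at h4
    rcases WithBot.add_eq_bot.1 h4 with h5 | h5
    · exact absurd h5 (val_tangible_ne_bot (hα w₀ hw₀))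
    · exact val_eq_bot.1 h5
  rw [← hall]
  exact hIS hw₀

/-- Normalization: a combination with arbitrary coefficients indexed by pairs
yields a genuine spanning or a ghost vector. -/
theorem spanned_or_ghost {κ : Type*} {S₀ : Set (Fin n → DR)} {v : Fin n → DR}
    (P : Finset κ) (t : κ → Fin n → DR) (g : κ → DR) (u : Fin n → DR)
    (htS : ∀ p ∈ P, t p ∈ S₀) (hu : GhostVec u)
    (hrel : ∀ j, v j = (∑ p ∈ P, g p * t p j) + u j) :
    SpannedBy S₀ v ∨ GhostVec v := by
  classical
  set c : (Fin n → DR) → DR := fun w => ∑ p ∈ P.filter (fun p => t p = w), g p with hc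
  have hfiber : ∀ j, ∑ w ∈ P.image t, c w * w j = ∑ p ∈ P, g p * t p j := by
    intro j
    rw [← Finset.sum_fiberwise_of_maps_to (fun p hp => Finset.mem_image_of_mem t hp)
      (fun p => g p * t p j)]
    refine Finset.sum_congr rfl fun w _ => ?_
    rw [hc, Finset.sum_mul]
    exact Finset.sum_congr rfl fun p hp => by rw [(Finset.mem_filter.1 hp).2]
  set W₁ := (P.image t).filter (fun w => Tangible (c w)) with hW₁
  set W₂ := (P.image t).filter (fun w => ¬ Tangible (c w)) with hW₂
  have hsplit : ∀ j, ∑ w ∈ P.image t, c w * w j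
      = (∑ w ∈ W₁, c w * w j) + ∑ w ∈ W₂, c w * w j := fun j =>
    (Finset.sum_filter_add_sum_filter_not (P.image t) (fun w => Tangible (c w)) _).symm
  have hW2ghost : ∀ j, IsGhost (∑ w ∈ W₂, c w * w j) := fun j =>
    ghost_sum fun w hw => by
      rcases tangible_or_ghost (c w) with h | h
      · exact absurd h (Finset.mem_filter.1 hw).2
      · exact ghost_mul_left h
  set u' : Fin n → DR := fun j => (∑ w ∈ W₂, c w * w j) + u j with hu'
  have hu'ghost : GhostVec u' := fun j => ghost_add' (hW2ghost j) (hu j)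
  have hrel' : ∀ j, v j = (∑ w ∈ W₁, c w * w j) + u' j := by
    intro j
    rw [hrel j, ← hfiber j, hsplit j, hu', add_assoc]
  rcases Finset.eq_empty_or_nonempty W₁ with hW₁e | hW₁ne
  · right
    intro j
    have := hrel' j
    rw [hW₁e, Finset.sum_empty, zero_add] at this
    rw [this]
    exact hu'ghost j
  · left
    refine spannedBy_iff.2 ⟨W₁, ?_, hW₁ne, c, fun w hw => (Finset.mem_filter.1 hw).2,
      u', hu'ghost, hrel'⟩
    intro w hw
    obtain ⟨p, hp, hpw⟩ := Finset.mem_image.1 (Finset.mem_filter.1 hw).1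
    exact hpw ▸ htS p hp

/-- Lemma A: an element of an s-base is not spanned by the rest. -/
theorem not_spanned_diff {V S : Set (Fin n → DR)} (hS : IsSBase V S)
    (h0 : (0 : Fin n → DR) ∈ S) {s : Fin n → DR} (hs : s ∈ S) :
    ¬ SpannedBy (S \ {s}) s := by
  classical
  intro hsp
  by_cases hs0 : s = 0
  · subst hs0
    exact (zero_mem_of_spanned hsp).2 rfl
  · have h0' : (0 : Fin n → DR) ∈ S \ {s} :=
      ⟨h0, fun hmem => hs0 (Set.mem_singleton_iff.1 hmem).symm⟩
    have hspan : TropSpans (S \ {s}) V := by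
      intro v hv
      obtain ⟨I, hIS, hIne, α, hα, u, hu, hrel⟩ := spannedBy_iff.1 (hS.2.1 v hv)
      by_cases hsI : s ∈ I
      · obtain ⟨J, hJS, _, β, hβ, u', hu', hrel'⟩ := spannedBy_iff.1 hsp
        set P := (I.erase s).disjSum J with hP
        set tt : (Fin n → DR) ⊕ (Fin n → DR) → Fin n → DR := Sum.elim id id with htt
        set g : (Fin n → DR) ⊕ (Fin n → DR) → DR :=
          Sum.elim α (fun w => α s * β w) with hg
        set U : Fin n → DR := fun j => α s * u' j + u j with hU
        have hUghost : GhostVec U := fun j => ghost_add' (ghost_mul (hu' j)) (hu j)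
        have hrel2 : ∀ j, v j = (∑ p ∈ P, g p * tt p j) + U j := by
          intro j
          have e1 : ∑ p ∈ P, g p * tt p j
              = (∑ w ∈ I.erase s, α w * w j) + ∑ w ∈ J, (α s * β w) * w j := by
            rw [hP, Finset.sum_disjSum]
            simp only [htt, hg, Sum.elim_inl, Sum.elim_inr, id]
          have e2 : α s * s j = (∑ w ∈ J, (α s * β w) * w j) + α s * u' j := by
            rw [hrel' j, left_distrib, Finset.mul_sum]
            congr 1
            exact Finset.sum_congr rfl fun w _ => (mul_assoc _ _ _).symm
          have e3 : ∑ w ∈ I, α w * w j = α s * s j + ∑ w ∈ I.erase s, α w * w j :=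
            (Finset.add_sum_erase I (fun w => α w * w j) hsI).symm
          rw [hrel j, e3, e2, e1, hU]
          ring
        have hmem : ∀ p ∈ P, tt p ∈ S \ {s} := by
          rintro (w | w) hp
          · rcases Finset.mem_disjSum.1 hp with ⟨a, ha, hae⟩ | ⟨a, _, hae⟩
            · cases hae
              exact ⟨hIS (Finset.mem_of_mem_erase ha),
                fun hmem => (Finset.ne_of_mem_erase ha) (Set.mem_singleton_iff.1 hmem)⟩
            · cases hae
          · rcases Finset.mem_disjSum.1 hp with ⟨a, _, hae⟩ | ⟨a, ha, hae⟩
            · cases hae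
            · cases hae
              exact hJS ha
        rcases spanned_or_ghost P tt g U hmem hUghost hrel2 with h | h
        · exact h
        · exact spannedBy_of_ghost h0' h
      · refine spannedBy_iff.2 ⟨I, ?_, hIne, α, hα, u, hu, hrel⟩
        intro w hw
        exact ⟨hIS hw, fun hmem => hsI ((Set.mem_singleton_iff.1 hmem) ▸ hw)⟩
    exact hS.2.2 (S \ {s}) (Set.sdiff_singleton_ssubset.2 hs) hspan

theorem zero_mem_sbase {V : Submodule DR (Fin n → DR)} {S : Set (Fin n → DR)}
    (hS : IsSBase (V : Set (Fin n → DR)) S) : (0 : Fin n → DR) ∈ S :=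
  zero_mem_of_spanned (hS.2.1 0 V.zero_mem)

theorem not_ghostvec_sbase {V : Submodule DR (Fin n → DR)} {S : Set (Fin n → DR)}
    (hS : IsSBase (V : Set (Fin n → DR)) S) {s : Fin n → DR} (hs : s ∈ S)
    (hne : s ≠ 0) : ¬ GhostVec s := by
  intro hg
  apply not_spanned_diff hS (zero_mem_sbase hS) hs
  exact spannedBy_of_ghost
    ⟨zero_mem_sbase hS, fun hmem => hne (Set.mem_singleton_iff.1 hmem).symm⟩ hg

end Vectors

theorem eq_add_of_lt_right {x y z : DR} (h : x = y + z) (hv : val z < val y) : x = y := by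
  rw [h]; exact add_eq_left hv

theorem eq_add_of_lt_left {x y z : DR} (h : x = y + z) (hv : val y < val x) : x = z := by
  have hx : val x = val y ⊔ val z := by rw [h, val_add']
  have hz : val y < val z := by
    rcases le_or_gt (val z) (val y) with hle | hlt
    · exact absurd (hx.trans_le (sup_le le_rfl hle)) (not_le.2 hv)
    · exact hlt
  rw [h]; exact add_eq_right hz

/-- Lemma D: every element of the s-base `S` has a tangible scalar multiple in `S'`. -/
theorem exists_scalar_multiple {n : ℕ} {V : Submodule DR (Fin n → DR)}
    {S S' : Set (Fin n → DR)} (hS : IsSBase (V : Set (Fin n → DR)) S)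
    (hS' : IsSBase (V : Set (Fin n → DR)) S')
    {s : Fin n → DR} (hs : s ∈ S) :
    ∃ w ∈ S', ∃ β : DR, Tangible β ∧ w = β • s := by
  classical
  by_cases hs0 : s = 0
  · refine ⟨0, zero_mem_sbase hS', 1, tangible_one, ?_⟩
    rw [hs0, one_smul]
  obtain ⟨I, hIS', hIne, α, hα, u, hu, hrel⟩ := spannedBy_iff.1 (hS'.2.1 s (hS.1 hs))
  have hchoice : ∀ w : Fin n → DR, ∃ (K : Finset (Fin n → DR))
      (β : (Fin n → DR) → DR) (uw : Fin n → DR), w ∈ I →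
      (↑K ⊆ S ∧ (∀ t ∈ K, Tangible (β t)) ∧ GhostVec uw ∧
        ∀ j, w j = (∑ t ∈ K, β t * t j) + uw j) := by
    intro w
    by_cases hw : w ∈ I
    · obtain ⟨K, hKS, _, β, hβ, uw, huw, hrelw⟩ :=
        spannedBy_iff.1 (hS.2.1 w (hS'.1 (hIS' hw)))
      exact ⟨K, β, uw, fun _ => ⟨hKS, hβ, huw, hrelw⟩⟩
    · exact ⟨∅, fun _ => 0, 0, fun h => absurd h hw⟩
  choose K β uw hprops using hchoice
  set Q : Finset ((_ : Fin n → DR) × (Fin n → DR)) := I.sigma (fun w => K w) with hQ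
  set g : ((_ : Fin n → DR) × (Fin n → DR)) → DR := fun p => α p.1 * β p.1 p.2 with hg
  set U : Fin n → DR := fun j => (∑ w ∈ I, α w * uw w j) + u j with hU
  have hUghost : GhostVec U := fun j =>
    ghost_add' (ghost_sum fun w hw => ghost_mul ((hprops w hw).2.2.1 j)) (hu j)
  have hcomp : ∀ j, s j = (∑ p ∈ Q, g p * p.2 j) + U j := by
    intro j
    have e1 : ∑ p ∈ Q, g p * p.2 j = ∑ w ∈ I, ∑ t ∈ K w, (α w * β w t) * t j := by
      rw [hQ, Finset.sum_sigma]
    have e2 : ∀ w ∈ I, α w * w j = (∑ t ∈ K w, (α w * β w t) * t j) + α w * uw w j := by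
      intro w hw
      rw [(hprops w hw).2.2.2 j, left_distrib, Finset.mul_sum]
      congr 1
      exact Finset.sum_congr rfl fun t _ => (mul_assoc _ _ _).symm
    calc s j = (∑ w ∈ I, α w * w j) + u j := hrel j
      _ = (∑ w ∈ I, ((∑ t ∈ K w, (α w * β w t) * t j) + α w * uw w j)) + u j := by
          rw [Finset.sum_congr rfl e2]
      _ = ((∑ w ∈ I, ∑ t ∈ K w, (α w * β w t) * t j) + ∑ w ∈ I, α w * uw w j) + u j := by
          rw [Finset.sum_add_distrib]
      _ = (∑ p ∈ Q, g p * p.2 j) + U j := by rw [e1, hU]; ring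
  set Qs := Q.filter (fun p => p.2 = s) with hQs
  set Qr := Q.filter (fun p => ¬ p.2 = s) with hQr
  set c : DR := ∑ p ∈ Qs, g p with hc
  have hrel3 : ∀ j, s j = c * s j + ((∑ p ∈ Qr, g p * p.2 j) + U j) := by
    intro j
    have hsum_split : (∑ p ∈ Q, g p * p.2 j) = c * s j + ∑ p ∈ Qr, g p * p.2 j := by
      rw [← Finset.sum_filter_add_sum_filter_not Q (fun p => p.2 = s)
        (fun p => g p * p.2 j)]
      congr 1
      rw [hc, Finset.sum_mul]
      exact Finset.sum_congr rfl fun p hp => by rw [(Finset.mem_filter.1 hp).2]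
    conv_lhs => rw [hcomp j, hsum_split, add_assoc]
  have hQrS : ∀ p ∈ Qr, p.2 ∈ S \ {s} := by
    intro p hp
    have h1 := Finset.mem_filter.1 hp
    have h2 := Finset.mem_sigma.1 h1.1
    exact ⟨(hprops p.1 h2.1).1 h2.2, fun hmem => h1.2 (Set.mem_singleton_iff.1 hmem)⟩
  have hnotspan := not_spanned_diff hS (zero_mem_sbase hS) hs
  have hnotghost := not_ghostvec_sbase hS hs hs0
  -- Step 1: `c = 1`.
  have hc1 : c = 1 := by
    by_cases hlt : val c < val (1 : DR)
    · exfalso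
      have hsD : ∀ j, s j = (∑ p ∈ Qr, g p * p.2 j) + U j := by
        intro j
        rcases eq_or_ne (s j) 0 with h0j | h0j
        · have := hrel3 j
          rw [h0j, mul_zero, zero_add] at this
          rw [h0j]; exact this
        · refine eq_add_of_lt_left (hrel3 j) ?_
          rw [val_mul']
          calc val c + val (s j) < val (1 : DR) + val (s j) := by
                refine WithBot.add_lt_add_right ?_ hlt
                exact fun hb => h0j (val_eq_bot.1 hb)
            _ = val (s j) := by rw [val_one', WithBot.coe_zero, zero_add]
      rcases spanned_or_ghost Qr (fun p => p.2) g U hQrS hUghost hsD with hsp | hgh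
      · exact hnotspan hsp
      · exact hnotghost hgh
    · by_cases hgt : val (1 : DR) < val c
      · exfalso
        obtain ⟨j, hj⟩ : ∃ j, s j ≠ 0 := by
          by_contra hall
          push_neg at hall
          exact hs0 (funext hall)
        have hv1 : val (s j) < val (c * s j) := by
          rw [val_mul']
          calc val (s j) = val (1 : DR) + val (s j) := by
                rw [val_one', WithBot.coe_zero, zero_add]
            _ < val c + val (s j) :=
                WithBot.add_lt_add_right (fun hb => hj (val_eq_bot.1 hb)) hgt
        have hv2 : val (c * s j) ≤ val (s j) := by
          conv_rhs => rw [hrel3 j]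
          rw [val_add']
          exact le_sup_left
        exact absurd hv1 (not_lt.2 hv2)
      · have hceq : val c = val (1 : DR) := le_antisymm (not_lt.1 hgt) (not_lt.1 hlt)
        rcases tangible_or_ghost c with hct | hcg
        · -- tangible of value 0 is 1
          cases hcc : c with
          | bot => rw [hcc] at hct; exact absurd hct (by simp [Tangible])
          | nb b r =>
            rw [hcc] at hct hceq
            cases b with
            | true => exact absurd hct (by simp [Tangible])
            | false =>
              have : r = (0 : ℝ) := by
                have : ((r : ℝ) : WithBot ℝ) = ((0 : ℝ) : WithBot ℝ) := hceq
                exact_mod_cast this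
              rw [this, one_def]
        · exfalso
          apply hnotghost
          intro j
          rcases eq_or_ne (s j) 0 with h0j | h0j
          · rw [h0j]; exact ghost_zero
          · have hvc : val (c * s j) = val (s j) := by
              rw [val_mul', hceq, val_one', WithBot.coe_zero, zero_add]
            have h11 := congrArg val (hrel3 j)
            rw [val_add'] at h11
            have hle : val ((∑ p ∈ Qr, g p * p.2 j) + U j) ≤ val (c * s j) := by
              rw [hvc, h11]
              exact le_sup_right
            have h12 : s j = c * s j :=
              (hrel3 j).trans (ghost_absorb (ghost_mul_left hcg) hle)
            rw [h12]
            exact ghost_mul_left hcg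
  -- Step 2: extract the dominant pair `p₀ = ⟨w₀, s⟩`.
  have hQsT : Tangible (∑ p ∈ Qs, g p) := by rw [← hc, hc1]; exact tangible_one
  obtain ⟨p₀, hp₀Qs, hp₀eq, hp₀max⟩ := sum_tangible_exists hQsT
  have hgp : g p₀ = 1 := by rw [hp₀eq, ← hc, hc1]
  have hp₀Q : p₀ ∈ Q := (Finset.mem_filter.1 hp₀Qs).1
  have hp2 : p₀.2 = s := (Finset.mem_filter.1 hp₀Qs).2
  set w₀ := p₀.1 with hw₀def
  have hw₀I : w₀ ∈ I := (Finset.mem_sigma.1 hp₀Q).1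
  have hsK : s ∈ K w₀ := by
    have := (Finset.mem_sigma.1 hp₀Q).2
    rwa [hp2] at this
  set a := α w₀ with hadef
  set b := β w₀ s with hbdef
  have hab : a * b = 1 := by
    have := hgp
    rw [hg] at this
    simp only at this
    rwa [hp2] at this
  have ha : Tangible a := hα w₀ hw₀I
  have hb : Tangible b := (hprops w₀ hw₀I).2.1 s hsK
  have hvab : val b + val a = (0 : ℝ) := by
    rw [add_comm, ← val_mul', hab, val_one']
  -- Step 3: show `w₀ = b • s`.
  refine ⟨w₀, hIS' hw₀I, b, hb, funext fun j => ?_⟩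
  rw [smul_apply']
  have hexp : w₀ j = b * s j +
      ((∑ t ∈ (K w₀).erase s, β w₀ t * t j) + uw w₀ j) := by
    rw [(hprops w₀ hw₀I).2.2.2 j, ← add_assoc,
      Finset.add_sum_erase (K w₀) (fun t => β w₀ t * t j) hsK]
  rcases tangible_or_ghost (s j) with hsj | hsj
  · -- tangible coordinate
    set T : DR := ∑ p ∈ Q, g p * p.2 j with hT
    have hTU : s j = T + U j := hcomp j
    have hterm : g p₀ * p₀.2 j = s j := by rw [hgp, hp2, one_mul]
    have hTs : s j = T ∧ val (U j) < val T := by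
      rcases lt_trichotomy (val (U j)) (val T) with hlt | heq | hgt
      · exact ⟨eq_add_of_lt_right hTU hlt, hlt⟩
      · exfalso
        refine not_ghost_of_tangible hsj ?_
        rw [hTU]
        exact add_ghost_of_val_eq heq.symm
      · exfalso
        have hvs : val T < val (s j) := by
          have : val (s j) = val T ⊔ val (U j) := by rw [hTU, val_add']
          rw [this, sup_eq_right.2 hgt.le]
          exact hgt
        have : s j = U j := eq_add_of_lt_left hTU hvs
        exact not_ghost_of_tangible hsj (this ▸ hUghost j)
    obtain ⟨hsT, hUlt⟩ := hTs
    have hTtan : Tangible T := hsT ▸ hsj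
    have hmax : ∀ p ∈ Q, p ≠ p₀ → val (g p * p.2 j) < val (g p₀ * p₀.2 j) :=
      sum_tangible_term_lt hTtan hp₀Q (hterm.trans hsT)
    have hKsum' : ∑ t ∈ K w₀, (a * β w₀ t) * t j = s j := by
      have hdom : ∀ t ∈ K w₀, t ≠ s →
          val ((a * β w₀ t) * t j) < val ((a * β w₀ s) * s j) := by
        intro t ht htne
        have hpQ : (⟨w₀, t⟩ : (_ : Fin n → DR) × (Fin n → DR)) ∈ Q :=
          Finset.mem_sigma.2 ⟨hw₀I, ht⟩
        have hpne : (⟨w₀, t⟩ : (_ : Fin n → DR) × (Fin n → DR)) ≠ p₀ := by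
          intro hcontra
          apply htne
          have h6 : (⟨w₀, t⟩ : (_ : Fin n → DR) × (Fin n → DR)).2 = p₀.2 := by rw [hcontra]
          simpa [hp2] using h6
        have h7 := hmax ⟨w₀, t⟩ hpQ hpne
        rw [hterm] at h7
        have h8 : val ((a * β w₀ s) * s j) = val (s j) := by
          rw [← hbdef, hab, one_mul]
        rw [h8]
        exact h7
      have h13 := sum_eq_of_forall_lt (f := fun t => (a * β w₀ t) * t j) hsK hdom
      have h14 : (∑ t ∈ K w₀, (a * β w₀ t) * t j) = (a * β w₀ s) * s j := h13
      rw [h14, ← hbdef, hab, one_mul]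
    have haw : a * w₀ j = s j + a * uw w₀ j := by
      rw [(hprops w₀ hw₀I).2.2.2 j, left_distrib, Finset.mul_sum]
      congr 1
      rw [← hKsum']
      exact Finset.sum_congr rfl fun t _ => (mul_assoc _ _ _).symm
    have hsmall : val (a * uw w₀ j) < val (s j) := by
      have t1 : val (a * uw w₀ j) ≤ val (∑ w ∈ I, α w * uw w j) :=
        val_term_le (f := fun w => α w * uw w j) hw₀I
      have t2 : val (∑ w ∈ I, α w * uw w j) ≤ val (U j) := by
        show _ ≤ val ((∑ w ∈ I, α w * uw w j) + u j)
        rw [val_add']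
        exact le_sup_left
      have t3 : val (U j) < val (s j) := by rw [hsT]; exact hUlt
      exact (t1.trans t2).trans_lt t3
    have haws : a * w₀ j = s j := by rw [haw]; exact add_eq_left hsmall
    calc w₀ j = 1 * w₀ j := (one_mul _).symm
      _ = (b * a) * w₀ j := by rw [mul_comm b a, hab]
      _ = b * (a * w₀ j) := mul_assoc _ _ _
      _ = b * s j := by rw [haws]
  · -- ghost (or bot) coordinate
    have h1 : val (a * w₀ j) ≤ val (∑ w ∈ I, α w * w j) :=
      val_term_le (f := fun w => α w * w j) hw₀I
    have h2 : val (∑ w ∈ I, α w * w j) ≤ val (s j) := by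
      conv_rhs => rw [hrel j]
      rw [val_add']
      exact le_sup_left
    have h3 : val (w₀ j) ≤ val (b * s j) := by
      have h4 : val b + (val a + val (w₀ j)) ≤ val b + val (s j) :=
        add_le_add le_rfl (by rw [← val_mul']; exact h1.trans h2)
      calc val (w₀ j) = (val b + val a) + val (w₀ j) := by rw [hvab, WithBot.coe_zero, zero_add]
        _ = val b + (val a + val (w₀ j)) := by rw [add_assoc]
        _ ≤ val b + val (s j) := h4
        _ = val (b * s j) := (val_mul' _ _).symm
    obtain ⟨O, hexp2⟩ : ∃ O : DR, w₀ j = b * s j + O := ⟨_, hexp⟩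
    have h15 : val (w₀ j) = val (b * s j) ⊔ val O := by rw [hexp2, val_add']
    have h5 : val O ≤ val (b * s j) := by
      have h16 : val O ≤ val (w₀ j) := by rw [h15]; exact le_sup_right
      exact h16.trans h3
    rw [hexp2, ghost_absorb (ghost_mul hsj) h5]

theorem spannedBy_single {n : ℕ} {S₀ : Set (Fin n → DR)} {v w : Fin n → DR} (hw : w ∈ S₀)
    {γ : DR} (hγ : Tangible γ) (he : v = γ • w) : SpannedBy S₀ v := by
  refine spannedBy_iff.2 ⟨{w}, by simpa using hw, Finset.singleton_nonempty _,
    fun _ => γ, fun _ _ => hγ, 0, ghostVec_zero, fun j => ?_⟩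
  rw [Finset.sum_singleton]
  show v j = γ * w j + (0 : DR)
  rw [add_zero]
  exact congrFun he j

theorem smul_smul_cancel {n : ℕ} {x y : Fin n → DR} {γ γ' : DR} (hinv : γ * γ' = 1)
    (he : x = γ • y) : y = γ' • x := by
  funext j
  rw [smul_apply', congrFun he j, smul_apply', ← mul_assoc, mul_comm γ' γ, hinv, one_mul]

end SBaseAux

open SBaseAux in
/-- The s-base of a supertropical vector space is unique up to multiplication by
tangible scalars. -/
theorem sbase_unique_up_to_scalars (n : ℕ) (V : Submodule DR (Fin n → DR))
    (S S' : Set (Fin n → DR)) (h : IsSBase (V : Set (Fin n → DR)) S)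
    (h' : IsSBase (V : Set (Fin n → DR)) S') :
    ∃ σ : S → S', Function.Bijective σ ∧
      ∀ s : S, ∃ α : DR, Tangible α ∧ (σ s : Fin n → DR) = α • (s : Fin n → DR) := by
  classical
  have hD : ∀ s : Fin n → DR, s ∈ S → ∃ w, w ∈ S' ∧ ∃ β : DR, Tangible β ∧ w = β • s := by
    intro s hs
    obtain ⟨w, hw, β, hβ, he⟩ := exists_scalar_multiple h h' hs
    exact ⟨w, hw, β, hβ, he⟩
  choose f hfS' b hbtan hbeq using hD
  refine ⟨fun s => ⟨f s.1 s.2, hfS' s.1 s.2⟩, ⟨?_, ?_⟩, fun s => ⟨b s.1 s.2, hbtan s.1 s.2, hbeq s.1 s.2⟩⟩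
  · -- injective
    intro s1 s2 heq
    have hvec : f s1.1 s1.2 = f s2.1 s2.2 := congrArg Subtype.val heq
    by_contra hne
    have hne' : s1.1 ≠ s2.1 := fun hc => hne (Subtype.ext hc)
    obtain ⟨b1', hb1'tan, hb1'⟩ := exists_inv (hbtan s1.1 s1.2)
    have he2 : s1.1 = (b1' * b s2.1 s2.2) • s2.1 := by
      funext j
      rw [smul_apply']
      have e1 : f s1.1 s1.2 j = b s1.1 s1.2 * s1.1 j := congrFun (hbeq s1.1 s1.2) j
      have e2 : f s2.1 s2.2 j = b s2.1 s2.2 * s2.1 j := congrFun (hbeq s2.1 s2.2) j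
      have e3 : b s1.1 s1.2 * s1.1 j = b s2.1 s2.2 * s2.1 j := by
        rw [← e1, ← e2, hvec]
      calc s1.1 j = 1 * s1.1 j := (one_mul _).symm
        _ = (b1' * b s1.1 s1.2) * s1.1 j := by rw [mul_comm b1' _, hb1']
        _ = b1' * (b s1.1 s1.2 * s1.1 j) := mul_assoc _ _ _
        _ = b1' * (b s2.1 s2.2 * s2.1 j) := by rw [e3]
        _ = (b1' * b s2.1 s2.2) * s2.1 j := (mul_assoc _ _ _).symm
    apply not_spanned_diff h (zero_mem_sbase h) s1.2
    refine spannedBy_single ⟨s2.2, fun hmem => hne' ?_⟩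
      (tangible_mul hb1'tan (hbtan s2.1 s2.2)) he2
    exact (Set.mem_singleton_iff.1 hmem).symm
  · -- surjective
    intro w
    obtain ⟨z, hz, γ, hγtan, hγeq⟩ := exists_scalar_multiple h' h w.2
    refine ⟨⟨z, hz⟩, ?_⟩
    have hfz : f z hz = (b z hz * γ) • w.1 := by
      funext j
      rw [smul_apply']
      calc f z hz j = b z hz * z j := congrFun (hbeq z hz) j
        _ = b z hz * (γ * w.1 j) := by
            have eγ : z j = γ * w.1 j := congrFun hγeq j
            rw [eγ]
        _ = (b z hz * γ) * w.1 j := (mul_assoc _ _ _).symm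
    by_contra hne
    have hne' : f z hz ≠ w.1 := fun hc => hne (Subtype.ext hc)
    obtain ⟨d, hdtan, hd⟩ := exists_inv (tangible_mul (hbtan z hz) hγtan)
    have hw' : w.1 = d • (f z hz) := smul_smul_cancel hd hfz
    apply not_spanned_diff h' (zero_mem_sbase h') w.2
    exact spannedBy_single ⟨hfS' z hz, fun hmem => hne' (Set.mem_singleton_iff.1 hmem)⟩
      hdtan hw'
end
end

section
/- Let B = ⟨·,·⟩ be a supertropical bilinear form on a D(ℝ)-submodule V ⊆ D(ℝ)^(n), let w₁, …, w_m ∈ V, and let W be the set of vectors of V tropically spanned by {w₁,…,w_m}. If β₁, …, β_m ∈ T ∪ {-∞} satisfy ∑ᵢ βᵢ⟨v, wᵢ⟩ ∈ G₀ for every v ∈ V, then ⟨v, ∑ᵢ βᵢwᵢ⟩ ∈ G₀ for every v ∈ W. -/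
noncomputable section

open DR

/-- A supertropical bilinear form on a subspace `V` of `D(ℝ)^(n)`. -/
structure SupertropicalBilinear (n : ℕ) (V : Set (Fin n → DR)) where
  B : (Fin n → DR) → (Fin n → DR) → DR
  add_left : ∀ u v w, u ∈ V → v ∈ V → w ∈ V → GhostSurp (B (v + w) u) (B v u + B w u)
  add_right : ∀ u v w, u ∈ V → v ∈ V → w ∈ V → GhostSurp (B u (v + w)) (B u v + B u w)
  smul_left : ∀ (α : DR) (v u : Fin n → DR), v ∈ V → u ∈ V → B (α • v) u = α * B v u
  smul_right : ∀ (α : DR) (u w : Fin n → DR), u ∈ V → w ∈ V → B u (α • w) = α * B u w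
  ghost_left : ∀ v w, v ∈ V → w ∈ V → GhostVec v → IsGhost (B v w)
  ghost_right : ∀ v w, v ∈ V → w ∈ V → GhostVec w → IsGhost (B v w)

theorem isGhost_add {x y : DR} (hx : IsGhost x) (hy : IsGhost y) : IsGhost (x + y) := by
  cases x with
  | bot =>
    show IsGhost (DR.add DR.bot y)
    rwa [DR.bot_add]
  | nb b r =>
    cases y with
    | bot =>
      show IsGhost (DR.add (DR.nb b r) DR.bot)
      rwa [DR.add_bot]
    | nb c s =>
      show IsGhost (DR.add (DR.nb b r) (DR.nb c s))
      simp only [DR.add]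
      split_ifs <;> first | exact hy | exact hx | trivial

theorem isGhost_of_surp {x y : DR} (hxy : GhostSurp x y) (hy : IsGhost y) : IsGhost x := by
  obtain ⟨c, hc, rfl⟩ := hxy
  exact isGhost_add hy hc

theorem ghostSurp_refl (x : DR) : GhostSurp x x :=
  ⟨DR.bot, trivial, by rw [show x + DR.bot = DR.add x DR.bot from rfl, DR.add_bot]⟩

theorem ghostSurp_trans {x y z : DR} (hxy : GhostSurp x y) (hyz : GhostSurp y z) :
    GhostSurp x z := by
  obtain ⟨c, hc, rfl⟩ := hxy
  obtain ⟨d, hd, rfl⟩ := hyz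
  exact ⟨d + c, isGhost_add hd hc, by rw [add_assoc]⟩

theorem ghostSurp_add_left {x y : DR} (a : DR) (hxy : GhostSurp x y) :
    GhostSurp (a + x) (a + y) := by
  obtain ⟨c, hc, rfl⟩ := hxy
  exact ⟨c, hc, by rw [add_assoc]⟩

theorem bilin_sum_right {n : ℕ} (V : Submodule DR (Fin n → DR))
    (Bl : SupertropicalBilinear n (V : Set (Fin n → DR)))
    {ι : Type*} (s : Finset ι) (u : ι → Fin n → DR) (hu : ∀ i ∈ s, u i ∈ V)
    (v : Fin n → DR) (hv : v ∈ V) :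
    GhostSurp (Bl.B v (∑ i ∈ s, u i)) (∑ i ∈ s, Bl.B v (u i)) := by
  classical
  induction s using Finset.cons_induction with
  | empty =>
    simp only [Finset.sum_empty]
    refine ⟨Bl.B v 0, ?_, by rw [zero_add]⟩
    exact Bl.ghost_right v 0 hv (Submodule.zero_mem V) (fun j => trivial)
  | cons a s ha ih =>
    rw [Finset.sum_cons, Finset.sum_cons]
    have hsum : (∑ i ∈ s, u i) ∈ V :=
      Submodule.sum_mem V (fun i hi => hu i (Finset.mem_cons_of_mem hi))
    refine ghostSurp_trans
      (Bl.add_right v (u a) (∑ i ∈ s, u i) hv (hu a (Finset.mem_cons_self a s)) hsum) ?_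
    exact ghostSurp_add_left _ (ih (fun i hi => hu i (Finset.mem_cons_of_mem hi)))

/-- If `∑ᵢ βᵢ ⟨v, wᵢ⟩` is ghost for every `v ∈ V`, then `⟨v, ∑ᵢ βᵢ wᵢ⟩` is ghost
for every `v` in the subspace of `V` tropically spanned by the `wᵢ`. -/
theorem radical_combination (n m : ℕ) (V : Submodule DR (Fin n → DR))
    (Bl : SupertropicalBilinear n (V : Set (Fin n → DR)))
    (w : Fin m → Fin n → DR) (hw : ∀ i, w i ∈ V)
    (β : Fin m → DR) (hβ : ∀ i, TangibleOrBot (β i))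
    (h : ∀ v ∈ V, IsGhost (∑ i, β i * Bl.B v (w i))) :
    ∀ v ∈ V, SpannedBy (Set.range w) v →
      IsGhost (Bl.B v (fun j => ∑ i, β i * w i j)) := by
  intro v hv _
  have hvec : (fun j => ∑ i, β i * w i j) = ∑ i, β i • w i := by
    funext j
    rw [Finset.sum_apply]
    rfl
  rw [hvec]
  have hmem : ∀ i ∈ (Finset.univ : Finset (Fin m)), β i • w i ∈ V :=
    fun i _ => Submodule.smul_mem V (β i) (hw i)
  have hsurp := bilin_sum_right V Bl Finset.univ (fun i => β i • w i) hmem v hv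
  refine isGhost_of_surp hsurp ?_
  have : (∑ i, Bl.B v (β i • w i)) = ∑ i, β i * Bl.B v (w i) := by
    refine Finset.sum_congr rfl (fun i _ => ?_)
    exact Bl.smul_right (β i) v (w i) hv (hw i)
  rw [this]
  exact h v hv
end
end
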